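/- Let K be a compact Hausdorff space, f : K → 2^ω continuous, and μ a Radon probability measure on K determined by closed cylinders. Then the support of μ is separable. -/

import Mathlib

open MeasureTheory Set

theorem stmt13 {K : Type*} [TopologicalSpace K] [CompactSpace K] [T2Space K]
    [MeasurableSpace K] [BorelSpace K]
    (μ : Measure K) [IsProbabilityMeasure μ] [μ.Regular]
    (f : K → (ℕ → Bool)) (hf : Continuous f)
    -- `μ` is determined by closed cylinders:
    (hdet : ∀ U : Set K, IsOpen U →
      μ U = ⨆ (F : Set (ℕ → Bool)) (_ : IsClosed F) (_ : f ⁻¹' F ⊆ U), μ (f ⁻¹' F)) :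
    -- the support of `μ` is separable:
    TopologicalSpace.IsSeparable
      {x : K | ∀ U : Set K, IsOpen U → x ∈ U → 0 < μ U} := by
  classical
  set S := {x : K | ∀ U : Set K, IsOpen U → x ∈ U → 0 < μ U} with hSdef
  -- Step 1: the set of clopen subsets of `ℕ → Bool` is countable.
  have hclopenCount : {C : Set (ℕ → Bool) | IsClopen C}.Countable := by
    obtain ⟨b, hbc, -, hb⟩ := TopologicalSpace.exists_countable_basis (ℕ → Bool)
    have hsub : {C : Set (ℕ → Bool) | IsClopen C} ⊆
        (fun t : Set (Set (ℕ → Bool)) => ⋃₀ t) '' {t | t.Finite ∧ t ⊆ b} := by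
      intro C hC
      have hCc : IsCompact C := hC.isClosed.isCompact
      have hCo : IsOpen C := hC.isOpen
      have hcov : C ⊆ ⋃ s : {s // s ∈ b ∧ s ⊆ C}, (s : Set (ℕ → Bool)) := by
        intro x hx
        have := hb.open_eq_sUnion' hCo
        rw [this] at hx
        obtain ⟨s, hs, hxs⟩ := hx
        exact mem_iUnion.2 ⟨⟨s, hs.1, hs.2⟩, hxs⟩
      obtain ⟨t, ht⟩ := hCc.elim_finite_subcover
        (fun s : {s // s ∈ b ∧ s ⊆ C} => (s : Set (ℕ → Bool)))
        (fun s => hb.isOpen s.2.1) hcov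
      refine ⟨(fun s : {s // s ∈ b ∧ s ⊆ C} => (s : Set (ℕ → Bool))) '' ↑t,
        ⟨(t.finite_toSet).image _, ?_⟩, ?_⟩
      · rintro s ⟨u, -, rfl⟩
        exact u.2.1
      · apply Set.Subset.antisymm
        · rintro x ⟨s, ⟨u, hu, rfl⟩, hxs⟩
          exact u.2.2 hxs
        · intro x hx
          obtain ⟨u, hu⟩ := mem_iUnion.1 (ht hx)
          simp only [mem_iUnion, exists_prop] at hu
          exact ⟨u, ⟨u, hu.1, rfl⟩, hu.2⟩
    exact ((countable_setOf_finite_subset hbc).image _).mono hsub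
  -- Step 2: a closed set of positive measure meets `S`.
  have hmeet : ∀ A : Set K, IsClosed A → 0 < μ A → (A ∩ S).Nonempty := by
    intro A hA hpos
    by_contra hcon
    rw [Set.not_nonempty_iff_eq_empty] at hcon
    have hnbhd : ∀ a, a ∈ A → ∃ U, IsOpen U ∧ a ∈ U ∧ μ U = 0 := by
      intro a ha
      have haS : a ∉ S := by
        intro haS
        have : a ∈ A ∩ S := ⟨ha, haS⟩
        rw [hcon] at this
        exact this
      simp only [hSdef, mem_setOf_eq, not_forall] at haS
      obtain ⟨U, hU, haU, hμ⟩ := haS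
      exact ⟨U, hU, haU, by simpa using hμ⟩
    choose U hUo hUm hUz using hnbhd
    have hAc : IsCompact A := hA.isCompact
    obtain ⟨t, ht⟩ := hAc.elim_finite_subcover (fun a : A => U a a.2)
      (fun a => hUo a a.2) (fun x hx => mem_iUnion.2 ⟨⟨x, hx⟩, hUm x hx⟩)
    have : μ A = 0 := by
      refine measure_mono_null ht ?_
      refine (measure_biUnion_null_iff t.countable_toSet).2 ?_
      intro a _
      exact hUz a a.2
    exact absurd this hpos.ne'
  -- Step 3: a closed set of `ℕ → Bool` whose preimage is inside an open `U`
  -- can be enlarged to a clopen set with preimage inside `U`.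
  have hsqueeze : ∀ F : Set (ℕ → Bool), IsClosed F → ∀ U : Set K, IsOpen U →
      f ⁻¹' F ⊆ U → ∃ C, IsClopen C ∧ F ⊆ C ∧ f ⁻¹' C ⊆ U := by
    intro F hF U hU hFU
    -- every point outside F is separated from F by a clopen set
    have hsep : ∀ y, y ∉ F → ∃ C, IsClopen C ∧ F ⊆ C ∧ y ∉ C := by
      intro y hy
      have : y ∈ Fᶜ := hy
      obtain ⟨I, u, hu, hpi⟩ := (isOpen_pi_iff.1 hF.isOpen_compl) y this
      refine ⟨((I : Set ℕ).pi u)ᶜ, ?_, ?_, ?_⟩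
      · refine ⟨?_, ?_⟩
        · exact (isOpen_set_pi I.finite_toSet (fun i _ => (hu i ‹i ∈ I›).1)).isClosed_compl
        · exact (isClosed_set_pi (fun i _ => isClosed_discrete _)).isOpen_compl
      · intro z hz hzpi
        exact (hpi hzpi) hz
      · intro hyc
        exact hyc (fun i hi => (hu i hi).2)
    -- compactness argument
    set ι := {C : Set (ℕ → Bool) // IsClopen C ∧ F ⊆ C} with hι
    have hempty : Uᶜ ∩ ⋂ C : ι, f ⁻¹' (C : Set (ℕ → Bool)) = ∅ := by
      rw [Set.eq_empty_iff_forall_notMem]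
      rintro z ⟨hzU, hz⟩
      simp only [mem_iInter] at hz
      have hzF : f z ∈ F := by
        by_contra hzF
        obtain ⟨C, hC, hFC, hzC⟩ := hsep _ hzF
        exact hzC (hz ⟨C, hC, hFC⟩)
      exact hzU (hFU hzF)
    have hUc : IsCompact Uᶜ := hU.isClosed_compl.isCompact
    obtain ⟨t, ht⟩ := hUc.elim_finite_subfamily_closed
      (fun C : ι => f ⁻¹' (C : Set (ℕ → Bool)))
      (fun C => C.2.1.1.preimage hf) hempty
    refine ⟨⋂ C ∈ t, (C : Set (ℕ → Bool)), ?_, ?_, ?_⟩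
    · exact isClopen_biInter_finset (fun C _ => C.2.1)
    · intro z hz
      exact mem_iInter₂.2 fun C _ => C.2.2 hz
    · intro z hz
      by_contra hzU
      have : z ∈ Uᶜ ∩ ⋂ C ∈ t, f ⁻¹' (C : Set (ℕ → Bool)) := by
        refine ⟨hzU, ?_⟩
        simp only [mem_iInter]
        intro C hC
        exact mem_iInter₂.1 hz C hC
      rw [ht] at this
      exact this
  -- Step 4: construct the countable dense set.
  set T := {C : Set (ℕ → Bool) | IsClopen C ∧ (f ⁻¹' C ∩ S).Nonempty} with hT
  have hTc : T.Countable := hclopenCount.mono (fun C hC => hC.1)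
  have : Countable ↥T := hTc.to_subtype
  set D := Set.range (fun C : ↥T => C.2.2.some) with hD
  refine ⟨D, countable_range _, ?_⟩
  intro x hx
  rw [mem_closure_iff]
  intro U hU hxU
  have hpos : 0 < μ U := hx U hU hxU
  -- extract a closed set with positive measure
  have hexF : ∃ F, IsClosed F ∧ f ⁻¹' F ⊆ U ∧ 0 < μ (f ⁻¹' F) := by
    by_contra hcon
    push_neg at hcon
    have hz : (⨆ (F : Set (ℕ → Bool)) (_ : IsClosed F) (_ : f ⁻¹' F ⊆ U),
        μ (f ⁻¹' F)) = 0 := by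
      refine le_antisymm ?_ zero_le
      refine iSup_le fun F => iSup_le fun hF => iSup_le fun hFU => hcon F hF hFU
    rw [hdet U hU, hz] at hpos
    exact lt_irrefl _ hpos
  obtain ⟨F, hF, hFU, hFpos⟩ := hexF
  obtain ⟨C, hC, hFC, hCU⟩ := hsqueeze F hF U hU hFU
  have hCpos : 0 < μ (f ⁻¹' C) :=
    lt_of_lt_of_le hFpos (measure_mono (preimage_mono hFC))
  have hCne : (f ⁻¹' C ∩ S).Nonempty :=
    hmeet _ (hC.1.preimage hf) hCpos
  have hCT : C ∈ T := ⟨hC, hCne⟩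
  refine ⟨(⟨C, hCT⟩ : ↥T).2.2.some, ?_, ⟨⟨C, hCT⟩, rfl⟩⟩
  exact hCU (⟨C, hCT⟩ : ↥T).2.2.some_mem.1
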